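/- For every nonnegative t-scalar X there exists a unique nonnegative t-scalar S such that X = S ∘ S (the arithmetic square root of X). -/

import Mathlib

open scoped BigOperators
open scoped Classical

noncomputable section

variable {N : ℕ}

/-- The underlying group `G = ZMod I₁ × ⋯ × ZMod I_N`. -/
abbrev G (I : Fin N → ℕ) : Type := ∀ n : Fin N, ZMod (I n)

/-- A t-scalar is a function `G → ℂ`. -/
abbrev TS (I : Fin N → ℕ) : Type := G I → ℂ

variable {I : Fin N → ℕ} [∀ n, NeZero (I n)]

/-- Circular convolution product of t-scalars. -/
def tconv (X Y : TS I) : TS I := fun i => ∑ j, X (i - j) * Y j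

/-- The zero t-scalar. -/
def ZT : TS I := fun _ => 0

/-- The identity t-scalar: the indicator function of `0 ∈ G`. -/
def ET : TS I := fun i => if i = 0 then 1 else 0

/-- The Fourier transform of a t-scalar:
`F(X)(i) = Σ_j X(j)·exp(2π√−1·Σ_n i_n·j_n / I_n)`. -/
def tfourier (X : TS I) : TS I :=
  fun i => ∑ j, X j * Complex.exp (2 * Real.pi * Complex.I *
      ∑ n, ((i n).val : ℂ) * ((j n).val : ℂ) / ((I n : ℕ) : ℂ))

/-- Conjugate of a t-scalar: `conj(X)(i) = complex conjugate of X(−i)`. -/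
def tconj (X : TS I) : TS I := fun i => starRingEnd ℂ (X (-i))

/-- A t-scalar is self-conjugate if `X = conj(X)`. -/
def SelfConj (X : TS I) : Prop := X = tconj X

/-- Real part `Re(X) = 2⁻¹(X + conj X)` of a t-scalar. -/
def tRe (X : TS I) : TS I := fun i => (X i + tconj X i) / 2

/-- Imaginary part `Im(X) = (2√−1)⁻¹(X − conj X)` of a t-scalar. -/
def tIm (X : TS I) : TS I := fun i => (X i - tconj X i) / (2 * Complex.I)

/-- A t-scalar is nonnegative if it is `Y ∘ Y` for some self-conjugate `Y`. -/
def TNonneg (X : TS I) : Prop := ∃ Y : TS I, SelfConj Y ∧ X = tconv Y Y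

/-- A t-scalar is invertible if `X ∘ Y = E_T` for some `Y`. -/
def TInv (X : TS I) : Prop := ∃ Y : TS I, tconv X Y = ET


/-! ### Auxiliary Fourier machinery -/

section Aux

set_option linter.unusedSectionVars false

/-- The character pairing. -/
def ch (i j : G I) : ℂ := Complex.exp (2 * Real.pi * Complex.I *
      ∑ n, ((i n).val : ℂ) * ((j n).val : ℂ) / ((I n : ℕ) : ℂ))

lemma exp_two_pi_int (x : ℂ) (z : ℤ) :
    Complex.exp (2 * Real.pi * Complex.I * (x + z)) = Complex.exp (2 * Real.pi * Complex.I * x) := by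
  rw [mul_add, Complex.exp_add]
  have : (2 * (Real.pi:ℂ) * Complex.I * z) = z * (2 * Real.pi * Complex.I) := by ring
  rw [this, Complex.exp_int_mul_two_pi_mul_I, mul_one]

lemma ch_add (i j k : G I) : ch i (j + k) = ch i j * ch i k := by
  rw [ch, ch, ch, ← Complex.exp_add, ← mul_add, ← Finset.sum_add_distrib]
  set q : Fin N → ℕ := fun n => ((j n).val + (k n).val) / (I n) with hq
  have key : ∀ n : Fin N, ((i n).val : ℂ) * (((j + k) n).val : ℂ) / ((I n : ℕ) : ℂ)
      = (((i n).val : ℂ) * ((j n).val : ℂ) / ((I n : ℕ) : ℂ)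
        + ((i n).val : ℂ) * ((k n).val : ℂ) / ((I n : ℕ) : ℂ)) + ((-((i n).val * q n : ℕ) : ℤ) : ℂ) := by
    intro n
    have hm : ((I n : ℕ) : ℂ) ≠ 0 := Nat.cast_ne_zero.2 (NeZero.ne _)
    have hv : ((j n + k n).val + I n * q n) = (j n).val + (k n).val := by
      rw [hq]; simpa [ZMod.val_add] using Nat.mod_add_div ((j n).val + (k n).val) (I n)
    have hv' : (((j + k) n).val : ℂ) = ((j n).val : ℂ) + ((k n).val : ℂ) - (I n : ℕ) * (q n : ℕ) := by
      have := congrArg (fun t => ((t : ℕ) : ℂ)) hv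
      push_cast at this ⊢
      have hjk : (j + k) n = j n + k n := rfl
      rw [hjk]; linear_combination this
    rw [hv']
    push_cast
    field_simp
    ring
  have hsum : ∑ n, ((i n).val : ℂ) * (((j + k) n).val : ℂ) / ((I n : ℕ) : ℂ)
      = (∑ n, (((i n).val : ℂ) * ((j n).val : ℂ) / ((I n : ℕ) : ℂ)
        + ((i n).val : ℂ) * ((k n).val : ℂ) / ((I n : ℕ) : ℂ)))
        + ((-(∑ n, ((i n).val * q n : ℕ)) : ℤ) : ℂ) := by
    rw [Finset.sum_congr rfl fun n _ => key n, Finset.sum_add_distrib]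
    congr 1
    push_cast
    simp [Finset.sum_neg_distrib]
  rw [hsum, exp_two_pi_int]

lemma ch_zero (i : G I) : ch i (0 : G I) = 1 := by
  have : ∀ n : Fin N, ((0 : G I) n).val = 0 := fun n => ZMod.val_zero
  simp [ch, this]

lemma ch_ne_zero (i j : G I) : ch i j ≠ 0 := Complex.exp_ne_zero _

lemma ch_conj (i j : G I) : (starRingEnd ℂ) (ch i j) = ch i (-j) := by
  have h1 : ch i (-j) * ch i j = 1 := by rw [← ch_add]; simp [ch_zero]
  have h2 : (starRingEnd ℂ) (ch i j) * ch i j = 1 := by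
    rw [ch, ← Complex.exp_conj, ← Complex.exp_add]
    have hr : (starRingEnd ℂ) (2 * (Real.pi:ℂ) * Complex.I *
        ∑ n, ((i n).val : ℂ) * ((j n).val : ℂ) / ((I n : ℕ) : ℂ))
        = -(2 * (Real.pi:ℂ) * Complex.I *
        ∑ n, ((i n).val : ℂ) * ((j n).val : ℂ) / ((I n : ℕ) : ℂ)) := by
      simp only [map_mul, map_sum, map_div₀, Complex.conj_I, Complex.conj_natCast, map_ofNat,
        Complex.conj_ofReal, div_eq_mul_inv, map_inv₀]
      ring
    rw [hr, neg_add_cancel, Complex.exp_zero]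
  exact mul_right_cancel₀ (ch_ne_zero i j) (h2.trans h1.symm)

lemma sum_zmod_exp (m : ℕ) [NeZero m] (a : ZMod m) :
    ∑ x : ZMod m, Complex.exp (2 * Real.pi * Complex.I * (((x.val : ℕ) : ℂ) * ((a.val : ℕ) : ℂ) / (m : ℂ)))
      = if a = 0 then (m : ℂ) else 0 := by
  have hm0 : (m : ℂ) ≠ 0 := Nat.cast_ne_zero.2 (NeZero.ne _)
  by_cases ha : a = 0
  · simp [ha, ZMod.val_zero, ZMod.card]
  · rw [if_neg ha]
    set ζ : ℂ := Complex.exp (2 * Real.pi * Complex.I * (((a.val : ℕ) : ℂ) / (m : ℂ))) with hζ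
    have hterm : ∀ x : ZMod m, Complex.exp (2 * Real.pi * Complex.I *
        (((x.val : ℕ) : ℂ) * ((a.val : ℕ) : ℂ) / (m : ℂ))) = ζ ^ x.val := by
      intro x
      rw [hζ, ← Complex.exp_nat_mul]
      congr 1
      ring
    rw [Finset.sum_congr rfl fun x _ => hterm x]
    have hre : ∑ x : ZMod m, ζ ^ x.val = ∑ k ∈ Finset.range m, ζ ^ k := by
      apply Finset.sum_nbij' (fun x => (ZMod.val x)) (fun k => (k : ZMod m))
      · intro x _; exact Finset.mem_range.2 (ZMod.val_lt x)
      · intro k _; exact Finset.mem_univ _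
      · intro x _; exact ZMod.natCast_rightInverse x
      · intro k hk; exact ZMod.val_cast_of_lt (Finset.mem_range.1 hk)
      · intro x _; rfl
    have hζm : ζ ^ m = 1 := by
      rw [hζ, ← Complex.exp_nat_mul]
      have h9 : (m : ℂ) * (2 * Real.pi * Complex.I * (((a.val : ℕ) : ℂ) / (m : ℂ)))
          = (((a.val : ℕ) : ℤ) : ℂ) * (2 * Real.pi * Complex.I) := by
        push_cast; field_simp
      rw [h9, Complex.exp_int_mul_two_pi_mul_I]
    have hζ1 : ζ ≠ 1 := by
      intro h
      rw [hζ, Complex.exp_eq_one_iff] at h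
      obtain ⟨n, hn⟩ := h
      have hπ : (2 * (Real.pi : ℂ) * Complex.I) ≠ 0 := by
        simp [Complex.I_ne_zero, Real.pi_ne_zero, Complex.ofReal_ne_zero]
      have h2 : ((a.val : ℕ) : ℂ) / (m : ℂ) = n := by
        apply mul_left_cancel₀ hπ
        rw [hn]; ring
      rw [div_eq_iff hm0] at h2
      have h4 : ((a.val : ℕ) : ℤ) = n * m := by exact_mod_cast h2
      have h6 : m ∣ a.val := by
        have : (m : ℤ) ∣ ((a.val : ℕ) : ℤ) := ⟨n, by linarith⟩
        exact_mod_cast this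
      have h7 : a.val = 0 := Nat.eq_zero_of_dvd_of_lt h6 (ZMod.val_lt a)
      exact ha ((ZMod.val_eq_zero a).1 h7)
    rw [hre, geom_sum_eq hζ1, hζm, sub_self, zero_div]

lemma sum_ch (d : G I) : ∑ i : G I, ch i d = if d = 0 then (∏ n, (I n : ℂ)) else 0 := by
  have hfac : ∀ i : G I, ch i d = ∏ n, Complex.exp (2 * Real.pi * Complex.I *
      (((i n).val : ℂ) * ((d n).val : ℂ) / ((I n : ℕ) : ℂ))) := by
    intro i
    rw [ch, Finset.mul_sum, Complex.exp_sum]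
  rw [Finset.sum_congr rfl fun i _ => hfac i]
  have hswap : (∑ i : G I, ∏ n : Fin N, Complex.exp (2 * Real.pi * Complex.I *
      (((i n).val : ℂ) * (((d n).val : ℕ) : ℂ) / ((I n : ℕ) : ℂ))))
      = ∏ n : Fin N, ∑ x : ZMod (I n), Complex.exp (2 * Real.pi * Complex.I *
      (((x.val : ℕ) : ℂ) * (((d n).val : ℕ) : ℂ) / ((I n : ℕ) : ℂ))) :=
    (Fintype.prod_sum (fun (n : Fin N) (x : ZMod (I n)) => Complex.exp (2 * Real.pi * Complex.I *
      (((x.val : ℕ) : ℂ) * (((d n).val : ℕ) : ℂ) / ((I n : ℕ) : ℂ))))).symm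
  rw [hswap]
  have hcoord : ∀ n : Fin N, (∑ x : ZMod (I n), Complex.exp (2 * Real.pi * Complex.I *
      (((x.val : ℕ) : ℂ) * (((d n).val : ℕ) : ℂ) / ((I n : ℕ) : ℂ))))
      = if d n = 0 then ((I n : ℕ) : ℂ) else 0 := fun n => sum_zmod_exp (I n) (d n)
  rw [Finset.prod_congr rfl fun n _ => hcoord n]
  by_cases hd : d = 0
  · subst hd
    simp
  · rw [if_neg hd]
    obtain ⟨n₀, hn₀⟩ : ∃ n, d n ≠ 0 := by
      by_contra h
      push_neg at h
      exact hd (funext h)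
    exact Finset.prod_eq_zero (Finset.mem_univ n₀) (if_neg hn₀)

lemma prod_I_ne_zero : (∏ n, ((I n : ℕ) : ℂ)) ≠ 0 := by
  apply Finset.prod_ne_zero_iff.2
  intro n _
  exact Nat.cast_ne_zero.2 (NeZero.ne _)

lemma tfourier_apply (X : TS I) (i : G I) : tfourier X i = ∑ j, X j * ch i j := rfl

/-- The Fourier transform as a linear map. -/
def FT : TS I →ₗ[ℂ] TS I where
  toFun := tfourier
  map_add' X Y := by
    funext i
    simp [tfourier_apply, add_mul, Finset.sum_add_distrib]
  map_smul' c X := by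
    funext i
    simp [tfourier_apply, Finset.mul_sum, mul_assoc]

lemma tfourier_injective : Function.Injective (tfourier (I := I)) := by
  have : Function.Injective (FT (I := I)) := by
    rw [injective_iff_map_eq_zero]
    intro X hX
    have hX' : ∀ i, tfourier X i = 0 := fun i => congrFun hX i
    funext k
    have key : ∑ i, tfourier X i * ch i (-k) = X k * ∏ n, ((I n : ℕ) : ℂ) := by
      calc ∑ i, tfourier X i * ch i (-k)
          = ∑ i, ∑ j, X j * ch i j * ch i (-k) := by
            refine Finset.sum_congr rfl fun i _ => ?_
            rw [tfourier_apply, Finset.sum_mul]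
        _ = ∑ j, ∑ i, X j * ch i j * ch i (-k) := Finset.sum_comm
        _ = ∑ j, X j * ∑ i, ch i (j - k) := by
            refine Finset.sum_congr rfl fun j _ => ?_
            rw [Finset.mul_sum]
            refine Finset.sum_congr rfl fun i _ => ?_
            rw [mul_assoc, ← ch_add, sub_eq_add_neg]
        _ = ∑ j, X j * (if j - k = 0 then (∏ n, ((I n : ℕ) : ℂ)) else 0) := by
            refine Finset.sum_congr rfl fun j _ => ?_
            rw [sum_ch]
        _ = X k * ∏ n, ((I n : ℕ) : ℂ) := by
            rw [Finset.sum_eq_single k]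
            · simp
            · intro b _ hb
              simp [sub_eq_zero, hb]
            · intro h
              exact absurd (Finset.mem_univ k) h
    have h0 : ∑ i, tfourier X i * ch i (-k) = 0 := by
      simp [hX']
    rw [h0] at key
    exact (mul_eq_zero.1 key.symm).resolve_right prod_I_ne_zero
  exact this

lemma tfourier_surjective : Function.Surjective (tfourier (I := I)) := by
  have : Function.Surjective (FT (I := I)) :=
    LinearMap.injective_iff_surjective.1 tfourier_injective
  exact this

lemma tfourier_conv (X Y : TS I) (i : G I) :
    tfourier (tconv X Y) i = tfourier X i * tfourier Y i := by
  rw [tfourier_apply, tfourier_apply, tfourier_apply, Fintype.sum_mul_sum]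
  calc ∑ j, tconv X Y j * ch i j
      = ∑ j, ∑ k, X (j - k) * Y k * ch i j := by
        refine Finset.sum_congr rfl fun j _ => ?_
        rw [tconv, Finset.sum_mul]
    _ = ∑ k, ∑ j, X (j - k) * Y k * ch i j := Finset.sum_comm
    _ = ∑ k, ∑ m, X m * Y k * (ch i m * ch i k) := by
        refine Finset.sum_congr rfl fun k _ => ?_
        refine (Fintype.sum_equiv (Equiv.addRight k) _ _ fun m => ?_).symm
        simp only [Equiv.coe_addRight]
        rw [add_sub_cancel_right, ch_add]
    _ = ∑ m, ∑ k, X m * ch i m * (Y k * ch i k) := by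
        rw [Finset.sum_comm]
        exact Finset.sum_congr rfl fun m _ => Finset.sum_congr rfl fun k _ => by ring

lemma tfourier_tconj (X : TS I) (i : G I) :
    tfourier (tconj X) i = (starRingEnd ℂ) (tfourier X i) := by
  rw [tfourier_apply, tfourier_apply, map_sum]
  refine Fintype.sum_equiv (Equiv.neg (G I)) _ _ fun j => ?_
  simp only [Equiv.neg_apply, map_mul, tconj]
  rw [ch_conj, neg_neg]

lemma selfconj_iff (Y : TS I) :
    SelfConj Y ↔ ∀ i, (starRingEnd ℂ) (tfourier Y i) = tfourier Y i := by
  constructor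
  · intro h i
    rw [← tfourier_tconj, ← h]
  · intro h
    apply tfourier_injective
    funext i
    rw [tfourier_tconj, h i]

lemma tnonneg_iff (X : TS I) :
    TNonneg X ↔ ∀ i, ∃ r : ℝ, 0 ≤ r ∧ tfourier X i = (r : ℂ) := by
  constructor
  · rintro ⟨Y, hY, rfl⟩ i
    have hreal := (selfconj_iff Y).1 hY i
    obtain ⟨t, ht⟩ : ∃ t : ℝ, tfourier Y i = (t : ℂ) :=
      ⟨(tfourier Y i).re, (Complex.conj_eq_iff_re.1 hreal).symm⟩
    exact ⟨t ^ 2, sq_nonneg t, by rw [tfourier_conv, ht]; push_cast; ring⟩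
  · intro h
    choose r hr0 hr using h
    obtain ⟨Y, hY⟩ := tfourier_surjective (fun i => ((Real.sqrt (r i) : ℝ) : ℂ))
    have hYi : ∀ i, tfourier Y i = ((Real.sqrt (r i) : ℝ) : ℂ) := fun i => congrFun hY i
    refine ⟨Y, ?_, ?_⟩
    · rw [selfconj_iff]
      intro i
      rw [hYi i, Complex.conj_ofReal]
    · apply tfourier_injective
      funext i
      rw [tfourier_conv, hYi i, hr i, ← Complex.ofReal_mul, Real.mul_self_sqrt (hr0 i)]

end Aux

/-- every nonnegative t-scalar has a unique nonnegative arithmetic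
square root. -/
theorem arithmetic_sqrt_exists_unique (N : ℕ) (I : Fin N → ℕ) [∀ n, NeZero (I n)]
    (X : TS I) (hX : TNonneg X) :
    ∃! S : TS I, TNonneg S ∧ X = tconv S S := by
  rw [tnonneg_iff] at hX
  choose r hr0 hr using hX
  obtain ⟨S, hS⟩ := tfourier_surjective (fun i => ((Real.sqrt (r i) : ℝ) : ℂ))
  have hSi : ∀ i, tfourier S i = ((Real.sqrt (r i) : ℝ) : ℂ) := fun i => congrFun hS i
  have hSnn : TNonneg S :=
    (tnonneg_iff S).2 (fun i => ⟨Real.sqrt (r i), Real.sqrt_nonneg _, hSi i⟩)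
  have hXS : X = tconv S S := by
    apply tfourier_injective
    funext i
    rw [tfourier_conv, hSi i, hr i, ← Complex.ofReal_mul, Real.mul_self_sqrt (hr0 i)]
  refine ⟨S, ⟨hSnn, hXS⟩, ?_⟩
  rintro S' ⟨hS'nn, hXS'⟩
  apply tfourier_injective
  funext i
  obtain ⟨t, ht0, ht⟩ := (tnonneg_iff S').1 hS'nn i
  have hsq : t ^ 2 = r i := by
    have h1 : tfourier X i = (t : ℂ) ^ 2 := by
      rw [hXS', tfourier_conv, ht]; ring
    rw [hr i] at h1
    exact_mod_cast h1.symm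
  rw [ht, hSi i, ← hsq, Real.sqrt_sq ht0]
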